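/- In the Baumslag–Solitar automaton over A={0,1} with ψ(a)=(a,b), ψ(b)=(a,c)σ, ψ(c)=(b,c), identify A^ℕ with ℤ₂ via (aᵢ) ↦ Σaᵢ2ⁱ. Then a, b, c act on ℤ₂ as the affine maps X ↦ 3X, X ↦ 3X+1, X ↦ 3X+2 respectively, and in particular the group they generate is isomorphic to the set of maps X ↦ 3ⁿX + p with n ∈ ℤ, p ∈ ℤ[1/3], realized as transformations of ℤ₂. -/

import Mathlib

/-- The sequence of states of an automaton read along an infinite input word. -/
def stSeq {A Q : Type*} (τ : A → Q → Q) (q : Q) (x : ℕ → A) : ℕ → Q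
  | 0 => q
  | n + 1 => τ (x n) (stSeq τ q x n)

/-- The transformation of `A^ℕ` induced by an automaton at state `q`. -/
def actInf {A Q : Type*} (σ : A → Q → A) (τ : A → Q → Q) (q : Q) (x : ℕ → A) : ℕ → A :=
  fun n => σ (x n) (stSeq τ q x n)

/-- Output of the Baumslag–Solitar automaton (states `0 = a`, `1 = b`, `2 = c`):
`a` and `c` copy the digit, `b` flips it (`ψ(b)=(a,c)σ`). -/
def bsOut : Bool → Fin 3 → Bool := fun x q => if q = 1 then !x else x

/-- Transition of the Baumslag–Solitar automaton: `ψ(a)=(a,b)`, `ψ(b)=(a,c)σ`,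
`ψ(c)=(b,c)`. -/
def bsTrans : Bool → Fin 3 → Fin 3 := fun x q =>
  if q = 0 then (if x then 1 else 0)
  else if q = 1 then (if x then 2 else 0)
  else (if x then 2 else 1)

/-- The identification of `{0,1}^ℕ` with `ℤ₂`, `(aᵢ) ↦ Σ aᵢ 2ⁱ`. -/
noncomputable def toPadic (x : ℕ → Bool) : ℤ_[2] :=
  ∑' i : ℕ, (if x i then (1 : ℤ_[2]) else 0) * 2 ^ i

/-- The generators of the Baumslag–Solitar group as permutations of `{0,1}^ℕ`. -/
def bsGens : Set (Equiv.Perm (ℕ → Bool)) :=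
  {P | ∃ q : Fin 3, (P : (ℕ → Bool) → ℕ → Bool) = actInf bsOut bsTrans q}

/-- `p ∈ ℤ[1/3] ⊆ ℤ₂`. -/
def InZOneThird (p : ℤ_[2]) : Prop :=
  ∃ (i : ℤ) (j : ℕ), (3 : ℤ_[2]) ^ j * p = (i : ℤ_[2])

noncomputable section BS

def b2 (b : Bool) : ℤ_[2] := if b then 1 else 0

def shft (x : ℕ → Bool) : ℕ → Bool := fun n => x (n + 1)

lemma summable_toPadic (x : ℕ → Bool) :
    Summable (fun i : ℕ => (if x i then (1 : ℤ_[2]) else 0) * 2 ^ i) := by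
  apply Summable.of_norm_bounded (g := fun i : ℕ => (1/2 : ℝ) ^ i)
  · exact summable_geometric_of_lt_one (by norm_num) (by norm_num)
  · intro i
    calc ‖(if x i then (1 : ℤ_[2]) else 0) * 2 ^ i‖
        ≤ ‖(if x i then (1 : ℤ_[2]) else 0)‖ * ‖(2 : ℤ_[2]) ^ i‖ := norm_mul_le _ _
      _ ≤ 1 * ‖(2 : ℤ_[2]) ^ i‖ := by
          gcongr; exact PadicInt.norm_le_one _
      _ = (1/2 : ℝ) ^ i := by
          rw [one_mul, norm_pow]
          congr 1
          have : ((2 : ℕ) : ℤ_[2]) = (2 : ℤ_[2]) := by norm_cast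
          rw [← this, PadicInt.norm_p]; norm_num

lemma toPadic_rec (x : ℕ → Bool) :
    toPadic x = b2 (x 0) + 2 * toPadic (shft x) := by
  have hs := summable_toPadic x
  rw [toPadic, hs.tsum_eq_zero_add]
  simp only [pow_zero, mul_one]
  have h2 : (2 : ℤ_[2]) * toPadic (shft x)
      = ∑' i : ℕ, (if x (i+1) then (1:ℤ_[2]) else 0) * 2 ^ (i+1) := by
    rw [toPadic, ← Summable.tsum_mul_left _ (summable_toPadic (shft x))]
    congr 1; funext i
    show 2 * ((if shft x i then (1:ℤ_[2]) else 0) * 2 ^ i)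
        = (if x (i+1) then (1:ℤ_[2]) else 0) * 2 ^ (i+1)
    rw [shft]; ring
  rw [h2]; rfl

lemma stSeq_shift {A Q : Type*} (τ : A → Q → Q) (q : Q) (x : ℕ → A) (n : ℕ) :
    stSeq τ q x (n + 1) = stSeq τ (τ (x 0) q) (fun k => x (k+1)) n := by
  induction n with
  | zero => rfl
  | succ n ih => show τ (x (n+1)) _ = τ _ _; rw [ih]

lemma actInf_shift (q : Fin 3) (x : ℕ → Bool) :
    shft (actInf bsOut bsTrans q x) = actInf bsOut bsTrans (bsTrans (x 0) q) (shft x) := by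
  funext n
  show bsOut (x (n+1)) (stSeq bsTrans q x (n+1)) = bsOut (shft x n) _
  rw [stSeq_shift]; rfl

lemma D_step (q : Fin 3) (x : ℕ → Bool) :
    toPadic (actInf bsOut bsTrans q x) - (3 * toPadic x + ((q : ℕ) : ℤ_[2]))
      = 2 * (toPadic (actInf bsOut bsTrans (bsTrans (x 0) q) (shft x))
          - (3 * toPadic (shft x) + (((bsTrans (x 0) q : Fin 3) : ℕ) : ℤ_[2]))) := by
  rw [toPadic_rec (actInf bsOut bsTrans q x), actInf_shift, toPadic_rec x]
  have h0 : actInf bsOut bsTrans q x 0 = bsOut (x 0) q := rfl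
  rw [h0]
  fin_cases q <;> cases hx : x 0 <;>
    simp [bsOut, bsTrans, b2, hx]
  all_goals try ring

lemma D_norm (n : ℕ) (q : Fin 3) (x : ℕ → Bool) :
    ‖toPadic (actInf bsOut bsTrans q x) - (3 * toPadic x + ((q : ℕ) : ℤ_[2]))‖
      ≤ (1/2 : ℝ) ^ n := by
  induction n generalizing q x with
  | zero =>
      simpa using PadicInt.norm_le_one _
  | succ n ih =>
      rw [D_step, norm_mul]
      have h2 : ‖(2 : ℤ_[2])‖ = (1/2 : ℝ) := by
        have : ((2 : ℕ) : ℤ_[2]) = (2 : ℤ_[2]) := by norm_cast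
        rw [← this, PadicInt.norm_p]; norm_num
      rw [h2, pow_succ, mul_comm ((1/2:ℝ)^n)]
      exact mul_le_mul_of_nonneg_left (ih _ _) (by norm_num)

lemma act_formula (q : Fin 3) (x : ℕ → Bool) :
    toPadic (actInf bsOut bsTrans q x) = 3 * toPadic x + ((q : ℕ) : ℤ_[2]) := by
  have h : ‖toPadic (actInf bsOut bsTrans q x) - (3 * toPadic x + ((q : ℕ) : ℤ_[2]))‖ ≤ 0 := by
    have ht : Filter.Tendsto (fun n : ℕ => (1/2:ℝ)^n) Filter.atTop (nhds 0) :=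
      tendsto_pow_atTop_nhds_zero_of_lt_one (by norm_num) (by norm_num)
    exact ge_of_tendsto' ht (fun n => D_norm n q x)
  have := le_antisymm h (norm_nonneg _)
  rwa [norm_eq_zero, sub_eq_zero] at this

lemma bs_two_ne_zero : (2 : ℤ_[2]) ≠ 0 := by
  intro h
  have : ‖(2 : ℤ_[2])‖ = (1/2 : ℝ) := by
    have : ((2 : ℕ) : ℤ_[2]) = (2 : ℤ_[2]) := by norm_cast
    rw [← this, PadicInt.norm_p]; norm_num
  rw [h, norm_zero] at this; norm_num at this

lemma toPadic_head {x y : ℕ → Bool} (h : toPadic x = toPadic y) :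
    x 0 = y 0 ∧ toPadic (shft x) = toPadic (shft y) := by
  rw [toPadic_rec x, toPadic_rec y] at h
  have hxy : x 0 = y 0 := by
    by_contra hne
    have h1 : b2 (x 0) - b2 (y 0) = 2 * (toPadic (shft y) - toPadic (shft x)) := by
      linear_combination h
    have hnorm : ‖b2 (x 0) - b2 (y 0)‖ = 1 := by
      cases hx0 : x 0 <;> cases hy0 : y 0 <;> simp [hx0, hy0] at hne ⊢ <;>
        simp [b2, norm_neg, norm_one]
    rw [h1, norm_mul] at hnorm
    have h2 : ‖(2 : ℤ_[2])‖ = (1/2 : ℝ) := by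
      have : ((2 : ℕ) : ℤ_[2]) = (2 : ℤ_[2]) := by norm_cast
      rw [← this, PadicInt.norm_p]; norm_num
    rw [h2] at hnorm
    have := PadicInt.norm_le_one (toPadic (shft y) - toPadic (shft x))
    nlinarith [norm_nonneg (toPadic (shft y) - toPadic (shft x))]
  refine ⟨hxy, ?_⟩
  rw [hxy] at h
  have h2 : (2:ℤ_[2]) * toPadic (shft x) = 2 * toPadic (shft y) := by
    linear_combination h
  exact mul_left_cancel₀ bs_two_ne_zero h2

lemma toPadic_inj : Function.Injective toPadic := by
  intro x y h
  funext n
  induction n generalizing x y with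
  | zero => exact (toPadic_head h).1
  | succ n ih => exact ih (toPadic_head h).2

/-- Inverse automaton transition. -/
def bsTrans' : Bool → Fin 3 → Fin 3 := fun d q => bsTrans (bsOut d q) q

lemma bsOut_invol (d : Bool) (q : Fin 3) : bsOut (bsOut d q) q = d := by
  fin_cases q <;> cases d <;> simp [bsOut]

lemma stSeq_agree (q : Fin 3) (x : ℕ → Bool) (n : ℕ) :
    stSeq bsTrans' q (actInf bsOut bsTrans q x) n = stSeq bsTrans q x n := by
  induction n with
  | zero => rfl
  | succ n ih =>
      show bsTrans' (actInf bsOut bsTrans q x n) _ = bsTrans (x n) _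
      rw [ih, bsTrans', actInf, bsOut_invol]

lemma bs_left_inv (q : Fin 3) (x : ℕ → Bool) :
    actInf bsOut bsTrans' q (actInf bsOut bsTrans q x) = x := by
  funext n
  show bsOut (actInf bsOut bsTrans q x n) (stSeq bsTrans' q _ n) = x n
  rw [stSeq_agree, actInf, bsOut_invol]

lemma stSeq_agree' (q : Fin 3) (x : ℕ → Bool) (n : ℕ) :
    stSeq bsTrans q (actInf bsOut bsTrans' q x) n = stSeq bsTrans' q x n := by
  induction n with
  | zero => rfl
  | succ n ih =>
      show bsTrans (actInf bsOut bsTrans' q x n) _ = bsTrans' (x n) _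
      rw [ih]
      rfl

lemma bs_right_inv (q : Fin 3) (x : ℕ → Bool) :
    actInf bsOut bsTrans q (actInf bsOut bsTrans' q x) = x := by
  funext n
  show bsOut (actInf bsOut bsTrans' q x n) (stSeq bsTrans q _ n) = x n
  rw [stSeq_agree', actInf, bsOut_invol]

/-- The permutation given by the automaton at state `q`. -/
def bsPerm (q : Fin 3) : Equiv.Perm (ℕ → Bool) :=
  ⟨actInf bsOut bsTrans q, actInf bsOut bsTrans' q, bs_left_inv q, bs_right_inv q⟩

lemma bsPerm_mem_gens (q : Fin 3) : bsPerm q ∈ bsGens := Set.mem_setOf.mpr ⟨q, rfl⟩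

lemma isUnit_three : IsUnit (3 : ℤ_[2]) := by
  rw [PadicInt.isUnit_iff]
  have h3 : ((3 : ℤ) : ℤ_[2]) = (3 : ℤ_[2]) := by norm_cast
  have hle : ‖(3 : ℤ_[2])‖ ≤ 1 := PadicInt.norm_le_one _
  have hnlt : ¬ ‖((3 : ℤ) : ℤ_[2])‖ < 1 := by
    rw [PadicInt.norm_int_lt_one_iff_dvd]
    decide
  rw [h3] at hnlt
  linarith [lt_or_ge ‖(3 : ℤ_[2])‖ 1]

/-- `3` as a unit of `ℤ₂`. -/
def u3 : ℤ_[2]ˣ := isUnit_three.unit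

lemma u3_val : (u3 : ℤ_[2]) = 3 := isUnit_three.unit_spec

/-- `g` acts on `ℤ₂` as `X ↦ 3^s X + p`. -/
def UAct (g : Equiv.Perm (ℕ → Bool)) (s : ℤ) (p : ℤ_[2]) : Prop :=
  ∀ x : ℕ → Bool, toPadic (g x) = ((u3 ^ s : ℤ_[2]ˣ) : ℤ_[2]) * toPadic x + p

lemma UAct_one : UAct 1 0 0 := by
  intro x; simp

lemma UAct_mul {g h : Equiv.Perm (ℕ → Bool)} {s t : ℤ} {p q : ℤ_[2]}
    (hg : UAct g s p) (hh : UAct h t q) :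
    UAct (g * h) (s + t) (((u3 ^ s : ℤ_[2]ˣ) : ℤ_[2]) * q + p) := by
  intro x
  have : (g * h) x = g (h x) := rfl
  rw [this, hg, hh, zpow_add]
  push_cast
  ring

lemma UAct_inv {g : Equiv.Perm (ℕ → Bool)} {s : ℤ} {p : ℤ_[2]}
    (hg : UAct g s p) :
    UAct g⁻¹ (-s) (-(((u3 ^ (-s) : ℤ_[2]ˣ) : ℤ_[2]) * p)) := by
  intro x
  have hx := hg (g⁻¹ x)
  rw [show g (g⁻¹ x) = x from Equiv.apply_symm_apply g x] at hx
  have hu : ((u3 ^ (-s) : ℤ_[2]ˣ) : ℤ_[2]) * ((u3 ^ s : ℤ_[2]ˣ) : ℤ_[2]) = 1 := by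
    rw [← Units.val_mul, ← zpow_add, neg_add_cancel, zpow_zero, Units.val_one]
  calc toPadic (g⁻¹ x)
      = ((u3 ^ (-s) : ℤ_[2]ˣ) : ℤ_[2]) * (((u3 ^ s : ℤ_[2]ˣ) : ℤ_[2]) * toPadic (g⁻¹ x) + p)
        - ((u3 ^ (-s) : ℤ_[2]ˣ) : ℤ_[2]) * p := by
        rw [mul_add, ← mul_assoc, hu]; ring
    _ = ((u3 ^ (-s) : ℤ_[2]ˣ) : ℤ_[2]) * toPadic x + -(((u3 ^ (-s) : ℤ_[2]ˣ) : ℤ_[2]) * p) := by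
        rw [← hx]; ring

lemma UAct_gen (q : Fin 3) : UAct (bsPerm q) 1 ((q : ℕ) : ℤ_[2]) := by
  intro x
  have := act_formula q x
  rw [zpow_one, u3_val]
  exact this

lemma UAct_A : UAct (bsPerm 0) 1 0 := by simpa using UAct_gen 0

lemma UAct_A_zpow : ∀ n : ℤ, UAct (bsPerm 0 ^ n) n 0 := by
  intro n
  induction n using Int.induction_on with
  | zero => rw [zpow_zero]; exact UAct_one
  | succ n ih =>
      have h := UAct_mul ih UAct_A
      rw [← zpow_add_one] at h
      simpa using h
  | pred n ih =>
      have h := UAct_mul ih (UAct_inv UAct_A)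
      rw [← zpow_sub_one] at h
      simpa [← sub_eq_add_neg] using h

/-- The translation `X ↦ X + 1`. -/
def bsT : Equiv.Perm (ℕ → Bool) := bsPerm 1 * (bsPerm 0)⁻¹

lemma UAct_T : UAct bsT 0 1 := by
  have h := UAct_mul (UAct_gen 1) (UAct_inv UAct_A)
  simpa [bsT] using h

lemma UAct_T_zpow : ∀ n : ℤ, UAct (bsT ^ n) 0 ((n : ℤ) : ℤ_[2]) := by
  intro n
  induction n using Int.induction_on with
  | zero => rw [zpow_zero]; simpa using UAct_one
  | succ n ih =>
      have h := UAct_mul ih UAct_T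
      rw [← zpow_add_one] at h
      have : ((u3 ^ (0:ℤ) : ℤ_[2]ˣ) : ℤ_[2]) * 1 + ((n : ℤ) : ℤ_[2]) = (((n:ℤ)+1 : ℤ) : ℤ_[2]) := by
        push_cast; simp; ring
      rw [this] at h
      simpa using h
  | pred n ih =>
      have hTi := UAct_inv UAct_T
      have h := UAct_mul ih hTi
      rw [← zpow_sub_one] at h
      have : ((u3 ^ (0:ℤ) : ℤ_[2]ˣ) : ℤ_[2]) * (-(((u3 ^ (-(0:ℤ)) : ℤ_[2]ˣ) : ℤ_[2]) * 1))
          + ((-n : ℤ) : ℤ_[2]) = (((-n:ℤ)-1 : ℤ) : ℤ_[2]) := by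
        push_cast; simp; ring
      rw [this] at h
      simpa using h

lemma three_pow_u (a : ℕ) : (3 : ℤ_[2]) ^ a = ((u3 ^ (a:ℤ) : ℤ_[2]ˣ) : ℤ_[2]) := by
  rw [← u3_val, zpow_natCast, ← Units.val_pow_eq_pow_val]

lemma three_pow_mul_u (a : ℕ) (b : ℤ) :
    (3 : ℤ_[2]) ^ a * ((u3 ^ b : ℤ_[2]ˣ) : ℤ_[2]) = ((u3 ^ ((a:ℤ) + b) : ℤ_[2]ˣ) : ℤ_[2]) := by
  rw [three_pow_u, ← Units.val_mul, ← zpow_add]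

lemma izt_int (i : ℤ) : InZOneThird ((i : ℤ) : ℤ_[2]) := ⟨i, 0, by simp⟩

lemma izt_zero : InZOneThird (0 : ℤ_[2]) := by simpa using izt_int 0

lemma izt_neg {p : ℤ_[2]} (h : InZOneThird p) : InZOneThird (-p) := by
  obtain ⟨i, j, hij⟩ := h
  exact ⟨-i, j, by push_cast; rw [mul_neg, hij]⟩

lemma izt_add {p q : ℤ_[2]} (hp : InZOneThird p) (hq : InZOneThird q) :
    InZOneThird (p + q) := by
  obtain ⟨i, j, hij⟩ := hp
  obtain ⟨i', j', hij'⟩ := hq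
  refine ⟨3 ^ j' * i + 3 ^ j * i', j + j', ?_⟩
  push_cast
  rw [pow_add, mul_add]
  calc (3:ℤ_[2])^j * 3^j' * p + 3^j * 3^j' * q
      = 3^j' * (3^j * p) + 3^j * (3^j' * q) := by ring
    _ = 3^j' * (i:ℤ_[2]) + 3^j * (i':ℤ_[2]) := by rw [hij, hij']

lemma izt_three_pow_mul {p : ℤ_[2]} (d : ℕ) (h : InZOneThird p) :
    InZOneThird (3 ^ d * p) := by
  obtain ⟨i, j, hij⟩ := h
  refine ⟨3 ^ d * i, j, ?_⟩
  push_cast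
  rw [show (3:ℤ_[2])^j * (3^d * p) = 3^d * (3^j * p) by ring, hij]

lemma part2 : ∀ g ∈ Subgroup.closure bsGens, ∃ (m k : ℕ) (p : ℤ_[2]), InZOneThird p ∧
    ∀ x : ℕ → Bool,
      (3 : ℤ_[2]) ^ k * toPadic ((g : Equiv.Perm (ℕ → Bool)) x)
        = (3 : ℤ_[2]) ^ m * toPadic x + p := by
  intro g hg
  induction hg using Subgroup.closure_induction with
  | mem g hgmem =>
      obtain ⟨q, hq⟩ := hgmem
      refine ⟨1, 0, ((q : ℕ) : ℤ_[2]), by simpa using izt_int (q : ℕ), fun x => ?_⟩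
      rw [show (g : (ℕ → Bool) → ℕ → Bool) x = actInf bsOut bsTrans q x from congrFun hq x]
      simp [act_formula]
  | one => exact ⟨0, 0, 0, izt_zero, fun x => by simp⟩
  | mul g h _ _ ihg ihh =>
      obtain ⟨m, k, p, hp, hact⟩ := ihg
      obtain ⟨m', k', p', hp', hact'⟩ := ihh
      refine ⟨m + m', k + k', 3 ^ m * p' + 3 ^ k' * p,
        izt_add (izt_three_pow_mul m hp') (izt_three_pow_mul k' hp), fun x => ?_⟩
      have h1 := hact (h x)
      have h2 := hact' x
      have hmul : (g * h) x = g (h x) := rfl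
      rw [hmul, pow_add, pow_add]
      linear_combination (3:ℤ_[2])^k' * h1 + (3:ℤ_[2])^m * h2
  | inv g _ ihg =>
      obtain ⟨m, k, p, hp, hact⟩ := ihg
      refine ⟨k, m, -p, izt_neg hp, fun x => ?_⟩
      have h1 := hact (g⁻¹ x)
      rw [show g (g⁻¹ x) = x from Equiv.apply_symm_apply g x] at h1
      linear_combination -h1


/-- In the Baumslag–Solitar automaton (`ψ(a)=(a,b)`, `ψ(b)=(a,c)σ`, `ψ(c)=(b,c)`),
under the identification of `{0,1}^ℕ` with `ℤ₂`, the states `a,b,c` act as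
`X ↦ 3X`, `X ↦ 3X+1`, `X ↦ 3X+2`; and the group they generate is isomorphic to
the group of maps `X ↦ 3ⁿX + p` (`n ∈ ℤ`, `p ∈ ℤ[1/3]`) acting on `ℤ₂`: every
element acts as such a map (`3^k·(gX) = 3^m·X + p` encodes `X ↦ 3^{m−k}X + p/3^k`),
the correspondence is injective, and every such map arises. -/
theorem baumslag_solitar_affine_action :
    (∀ (q : Fin 3) (x : ℕ → Bool),
        toPadic (actInf bsOut bsTrans q x) = 3 * toPadic x + ((q : ℕ) : ℤ_[2])) ∧
    (∀ g ∈ Subgroup.closure bsGens, ∃ (m k : ℕ) (p : ℤ_[2]), InZOneThird p ∧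
        ∀ x : ℕ → Bool,
          (3 : ℤ_[2]) ^ k * toPadic ((g : Equiv.Perm (ℕ → Bool)) x)
            = (3 : ℤ_[2]) ^ m * toPadic x + p) ∧
    (∀ g ∈ Subgroup.closure bsGens, ∀ g' ∈ Subgroup.closure bsGens,
        (∀ x : ℕ → Bool, toPadic ((g : Equiv.Perm (ℕ → Bool)) x)
            = toPadic ((g' : Equiv.Perm (ℕ → Bool)) x)) → g = g') ∧
    (∀ (m k j : ℕ) (i : ℤ), ∃ g ∈ Subgroup.closure bsGens,
        ∀ x : ℕ → Bool,
          (3 : ℤ_[2]) ^ (k + j) * toPadic ((g : Equiv.Perm (ℕ → Bool)) x)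
            = (3 : ℤ_[2]) ^ (m + j) * toPadic x + (3 : ℤ_[2]) ^ k * (i : ℤ_[2])) := by
  refine ⟨act_formula, part2, ?_, ?_⟩
  · intro g _ g' _ h
    exact Equiv.ext fun x => toPadic_inj (h x)
  · intro m k j i
    have hA : bsPerm 0 ∈ Subgroup.closure bsGens := Subgroup.subset_closure (bsPerm_mem_gens 0)
    have hB : bsPerm 1 ∈ Subgroup.closure bsGens := Subgroup.subset_closure (bsPerm_mem_gens 1)
    have hT : bsT ∈ Subgroup.closure bsGens := mul_mem hB (inv_mem hA)
    set e : ℤ := (m : ℤ) + j - k with he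
    refine ⟨bsPerm 0 ^ (-(j:ℤ)) * bsT ^ i * bsPerm 0 ^ e,
      mul_mem (mul_mem (zpow_mem hA _) (zpow_mem hT _)) (zpow_mem hA _), fun x => ?_⟩
    have hact := UAct_mul (UAct_mul (UAct_A_zpow (-(j:ℤ))) (UAct_T_zpow i)) (UAct_A_zpow e)
    have hx := hact x
    have hs : (-(j:ℤ) + 0) + e = (m:ℤ) - k := by omega
    rw [hs] at hx
    rw [hx]
    have e1 : (3:ℤ_[2])^(k+j) * ((u3 ^ ((m:ℤ) - k) : ℤ_[2]ˣ) : ℤ_[2]) = (3:ℤ_[2])^(m+j) := by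
      rw [three_pow_mul_u, three_pow_u (m+j)]
      have hc : ((k+j:ℕ):ℤ) + ((m:ℤ) - k) = ((m+j:ℕ):ℤ) := by push_cast; ring
      rw [hc]
    have e2 : (3:ℤ_[2])^(k+j) * ((u3 ^ (-(j:ℤ)) : ℤ_[2]ˣ) : ℤ_[2]) = (3:ℤ_[2])^k := by
      rw [three_pow_mul_u, three_pow_u k]
      have hc : ((k+j:ℕ):ℤ) + (-(j:ℤ)) = ((k:ℕ):ℤ) := by push_cast; ring
      rw [hc]
    linear_combination toPadic x * e1 + ((i:ℤ):ℤ_[2]) * e2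

end BS
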